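/- Let (m_k)_{k∈ℕ} be positive reals and (c_k)_{k∈ℕ} ⊂ ℝ³ with |c_i − c_j| ≥ 5 for i ≠ j and Σ_k m_k/(1+|c_k|) < ∞. Set v(x) = 1 + Σ_k m_k/(2|x − c_k|) and f = v⁴. Then for every x ∈ ℝ³ with |x − c_k| ≥ 1 for all k, the gradient of log f at x satisfies |∇(log f)(x)| ≤ 2·Σ_k m_k/|x − c_k|². -/

import Mathlib

open scoped BigOperators

section aux

variable {E : Type*} [NormedAddCommGroup E] [InnerProductSpace ℝ E]

/-- Derivative of `y ↦ ‖y - c‖` away from `c`. -/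
lemma hasFDerivAt_norm_sub (c y : E) (h : y ≠ c) :
    HasFDerivAt (fun z => ‖z - c‖) (‖y - c‖⁻¹ • innerSL ℝ (y - c)) y := by
  have hne : y - c ≠ 0 := sub_ne_zero.2 h
  have ht : (0:ℝ) < ‖y - c‖ := norm_pos_iff.2 hne
  have h1 : HasFDerivAt (fun z : E => z - c) (ContinuousLinearMap.id ℝ E) y :=
    (hasFDerivAt_id y).sub_const c
  have h2 := h1.norm_sq
  have h3 := h2.sqrt (by positivity : ‖(fun z : E => z - c) y‖ ^ 2 ≠ 0)
  have hfun : (fun z : E => Real.sqrt (‖z - c‖ ^ 2)) = fun z : E => ‖z - c‖ := by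
    funext z; exact Real.sqrt_sq (norm_nonneg _)
  rw [hfun] at h3
  convert h3 using 1
  have hs : Real.sqrt (‖y - c‖ ^ 2) = ‖y - c‖ := Real.sqrt_sq (norm_nonneg _)
  ext z
  simp only [ContinuousLinearMap.smul_apply, hs, ContinuousLinearMap.coe_smul',
    Pi.smul_apply, ContinuousLinearMap.coe_comp', Function.comp_apply,
    ContinuousLinearMap.coe_id', id_eq, smul_eq_mul]
  rw [nsmul_eq_mul]
  field_simp
  ring

lemma norm_smul_clm (a : ℝ) (L : EuclideanSpace ℝ (Fin 3) →L[ℝ] ℝ) :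
    ‖a • L‖ = |a| * ‖L‖ := by
  rw [@norm_smul ℝ (EuclideanSpace ℝ (Fin 3) →L[ℝ] ℝ) _ _ _ _ a L, Real.norm_eq_abs]

end aux

set_option maxHeartbeats 1000000 in
/-- Pointwise gradient bound for the logarithm of the
Brill–Lindquist conformal factor to the fourth power:
`‖∇(log f)(x)‖ ≤ 2 Σ_k m_k/‖x − c_k‖²` whenever `‖x − c_k‖ ≥ 1` for all `k`. -/
theorem gradient_log_conformal_factor_pointwise_bound
    (m : ℕ → ℝ) (c : ℕ → EuclideanSpace ℝ (Fin 3))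
    (hm : ∀ k, 0 < m k)
    (hsep : ∀ i j, i ≠ j → (5 : ℝ) ≤ ‖c i - c j‖)
    (hsum : Summable (fun k => m k / (1 + ‖c k‖)))
    (x : EuclideanSpace ℝ (Fin 3)) (hx : ∀ k, 1 ≤ ‖x - c k‖) :
    ‖gradient (fun y => Real.log ((1 + ∑' k, m k / (2 * ‖y - c k‖)) ^ 4)) x‖
      ≤ 2 * ∑' k, m k / ‖x - c k‖ ^ 2 := by
  classical
  set g : ℕ → EuclideanSpace ℝ (Fin 3) → ℝ := fun k y => m k / (2 * ‖y - c k‖) with hg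
  set g' : ℕ → EuclideanSpace ℝ (Fin 3) → (EuclideanSpace ℝ (Fin 3) →L[ℝ] ℝ) :=
    fun k y => (-(m k) / (2 * ‖y - c k‖ ^ 3)) • innerSL ℝ (y - c k) with hg'
  set u : ℕ → ℝ := fun k => 2 * m k / ‖x - c k‖ ^ 2 with hu
  set s : Set (EuclideanSpace ℝ (Fin 3)) := Metric.ball x (1/2) with hs
  have hxck : ∀ k, (0:ℝ) < ‖x - c k‖ := fun k => lt_of_lt_of_le one_pos (hx k)
  -- lower bound for ‖y - c k‖ on the ball
  have hlow : ∀ y ∈ s, ∀ k, ‖x - c k‖ / 2 ≤ ‖y - c k‖ := by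
    intro y hy k
    have hyx : dist y x < 1/2 := Metric.mem_ball.1 hy
    rw [dist_eq_norm] at hyx
    have : ‖x - c k‖ ≤ ‖x - y‖ + ‖y - c k‖ := by
      calc ‖x - c k‖ = ‖(x - y) + (y - c k)‖ := by congr 1; abel
        _ ≤ ‖x - y‖ + ‖y - c k‖ := norm_add_le _ _
    have hxy : ‖x - y‖ < 1/2 := by rwa [norm_sub_rev]
    have h1 := hx k
    linarith
  have hypos : ∀ y ∈ s, ∀ k, (0:ℝ) < ‖y - c k‖ := by
    intro y hy k
    have := hlow y hy k
    have := hxck k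
    linarith
  -- basic comparison: 1 + ‖c k‖ ≤ (2 + ‖x‖) * ‖x - c k‖
  have hcomp : ∀ k, 1 + ‖c k‖ ≤ (2 + ‖x‖) * ‖x - c k‖ := by
    intro k
    have h1 : ‖c k‖ ≤ ‖x‖ + ‖x - c k‖ := by
      calc ‖c k‖ = ‖x - (x - c k)‖ := by congr 1; abel
        _ ≤ ‖x‖ + ‖x - c k‖ := norm_sub_le _ _
    have h2 := hx k
    nlinarith [norm_nonneg x]
  -- summability of the bound u
  have hu_sum : Summable u := by
    apply Summable.of_nonneg_of_le (fun k => by have := hm k; positivity)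
      (fun k => ?_) (hsum.mul_left (2 * (2 + ‖x‖)))
    have h1 := hcomp k
    have h2 := hx k
    have h3 := hxck k
    have hA : (0:ℝ) < 1 + ‖c k‖ := by positivity
    rw [hu]
    have heq : 2 * (2 + ‖x‖) * (m k / (1 + ‖c k‖)) = (2 * (2 + ‖x‖) * m k) / (1 + ‖c k‖) := by
      ring
    rw [heq, div_le_div_iff₀ (by positivity) hA]
    have h4 : (2 + ‖x‖) * ‖x - c k‖ ≤ (2 + ‖x‖) * ‖x - c k‖ ^ 2 := by
      nlinarith [norm_nonneg x]
    nlinarith [hm k, mul_le_mul_of_nonneg_left h1 (by linarith [hm k] : (0:ℝ) ≤ 2 * m k),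
      mul_le_mul_of_nonneg_left h4 (by linarith [hm k] : (0:ℝ) ≤ 2 * m k)]
  -- summability of g at x
  have hg0 : Summable (fun k => g k x) := by
    apply Summable.of_nonneg_of_le (fun k => by have := hm k; have := hxck k; positivity)
      (fun k => ?_) (hsum.mul_left (2 + ‖x‖))
    have h1 := hcomp k
    have h3 := hxck k
    have hA : (0:ℝ) < 1 + ‖c k‖ := by positivity
    rw [hg]
    have : (2 + ‖x‖) * (m k / (1 + ‖c k‖)) = ((2 + ‖x‖) * m k) / (1 + ‖c k‖) := by ring
    rw [this]
    simp only
    rw [div_le_div_iff₀ (by positivity) hA]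
    nlinarith [hm k, mul_le_mul_of_nonneg_left h1 (le_of_lt (hm k))]
  -- each term has the claimed derivative on the ball
  have hder : ∀ k, ∀ y ∈ s, HasFDerivAt (g k) (g' k y) y := by
    intro k y hy
    have hyk : (0:ℝ) < ‖y - c k‖ := hypos y hy k
    have hne : y ≠ c k := by
      intro h; rw [h] at hyk; simp at hyk
    have hN := hasFDerivAt_norm_sub (c k) y hne
    have hinv : HasDerivAt (fun t : ℝ => (m k / 2) * t⁻¹)
        ((m k / 2) * (-(‖y - c k‖ ^ 2)⁻¹)) ‖y - c k‖ :=
      (hasDerivAt_inv hyk.ne').const_mul (m k / 2)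
    have hcompDer := hinv.comp_hasFDerivAt y hN
    have hfun2 : ((fun t : ℝ => (m k / 2) * t⁻¹) ∘ fun z : EuclideanSpace ℝ (Fin 3) => ‖z - c k‖) = g k := by
      funext z
      simp only [Function.comp_apply, hg, div_eq_mul_inv, mul_inv]
      ring
    rw [hfun2] at hcompDer
    refine hcompDer.congr_fderiv ?_
    symm
    rw [hg', smul_smul]
    congr 1
    field_simp
  -- norm of the derivative terms
  have hnorm : ∀ k, ∀ y : EuclideanSpace ℝ (Fin 3), (0:ℝ) < ‖y - c k‖ →
      ‖g' k y‖ = m k / (2 * ‖y - c k‖ ^ 2) := by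
    intro k y hyk
    rw [hg']
    simp only
    rw [norm_smul_clm, innerSL_apply_norm]
    rw [abs_div, abs_neg, abs_of_pos (hm k),
      abs_of_pos (by positivity : (0:ℝ) < 2 * ‖y - c k‖ ^ 3)]
    field_simp
  -- bound on the ball
  have hbound : ∀ k, ∀ y ∈ s, ‖g' k y‖ ≤ u k := by
    intro k y hy
    have hyk := hypos y hy k
    rw [hnorm k y hyk, hu]
    have h1 := hlow y hy k
    have h3 := hxck k
    rw [div_le_div_iff₀ (by positivity) (by positivity)]
    nlinarith [hm k, mul_le_mul h1 h1 (by positivity) hyk.le]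
  have hxmem : x ∈ s := by simp [hs]
  -- differentiate the series
  have hS : HasFDerivAt (fun y : EuclideanSpace ℝ (Fin 3) => ∑' k, g k y) (∑' k, g' k x) x :=
    hasFDerivAt_tsum_of_isPreconnected hu_sum Metric.isOpen_ball
      (convex_ball x (1/2)).isPreconnected hder hbound hxmem hg0 hxmem
  -- the sum S x and its positivity
  set T : EuclideanSpace ℝ (Fin 3) →L[ℝ] ℝ := ∑' k, g' k x with hT
  set Sx : ℝ := ∑' k, g k x with hSx
  have hSx0 : 0 ≤ Sx := tsum_nonneg (fun k => by
    rw [hg]; exact div_nonneg (hm k).le (by positivity))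
  set v : ℝ := 1 + Sx with hv
  have hv1 : (1:ℝ) ≤ v := by simp [hv]; exact hSx0
  have hvpos : (0:ℝ) < v := lt_of_lt_of_le one_pos hv1
  -- chain rule through pow and log
  have hplus : HasFDerivAt (fun y : EuclideanSpace ℝ (Fin 3) => 1 + ∑' k, g k y) T x := hS.const_add 1
  have hpow := (hasDerivAt_pow 4 v).comp_hasFDerivAt x hplus
  have hne4 : ((fun t : ℝ => t ^ 4) ∘ fun y : EuclideanSpace ℝ (Fin 3) => 1 + ∑' k, g k y) x ≠ 0 := by
    show v ^ 4 ≠ 0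
    positivity
  have hlog := hpow.log hne4
  have hD : HasFDerivAt
      (fun y : EuclideanSpace ℝ (Fin 3) => Real.log ((1 + ∑' k, m k / (2 * ‖y - c k‖)) ^ 4))
      ((4 / v) • T) x := by
    refine HasFDerivAt.congr_fderiv hlog ?_
    symm
    rw [smul_smul]
    congr 1
    show (4:ℝ) / v = (v ^ 4)⁻¹ * (((4:ℕ):ℝ) * v ^ (4 - 1))
    have hvne : v ≠ 0 := hvpos.ne'
    push_cast
    field_simp
  have hgrad := hD.hasGradientAt.gradient
  rw [hgrad, LinearIsometryEquiv.norm_map]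
  -- norm computation
  have hsum_norm : Summable (fun k => ‖g' k x‖) :=
    Summable.of_nonneg_of_le (fun k => norm_nonneg _) (fun k => hbound k x hxmem) hu_sum
  have hTnorm : ‖T‖ ≤ ∑' k, ‖g' k x‖ := norm_tsum_le_tsum_norm hsum_norm
  have hsum_eq : ∑' k, ‖g' k x‖ = 2⁻¹ * ∑' k, m k / ‖x - c k‖ ^ 2 := by
    rw [← tsum_mul_left]
    congr 1
    funext k
    rw [hnorm k x (hxck k), inv_mul_eq_div, div_div, mul_comm]
  have hTle : ‖T‖ ≤ 2⁻¹ * ∑' k, m k / ‖x - c k‖ ^ 2 := by rw [← hsum_eq]; exact hTnorm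
  rw [norm_smul_clm, abs_of_pos (by positivity : (0:ℝ) < 4 / v)]
  have h4v : (4:ℝ) / v ≤ 4 := by
    rw [div_le_iff₀ hvpos]
    nlinarith
  calc 4 / v * ‖T‖ ≤ 4 * (2⁻¹ * ∑' k, m k / ‖x - c k‖ ^ 2) :=
        mul_le_mul h4v hTle (norm_nonneg _) (by norm_num)
    _ = 2 * ∑' k, m k / ‖x - c k‖ ^ 2 := by ring
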